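/- Let ψ ∈ ℂ^(Fin n → Fin 2) be a unit vector all of whose entries are real, and let ρ = ψψᴴ be the associated pure state. Then the Bell distribution of ρ coincides with its Pauli distribution: for every a ∈ (Fin n → Fin 4), q_ρ(a) := ⟨Φ_a| (ρ ⊗ ρ) |Φ_a⟩ = ⟨ψ| P_a |ψ⟩² / 2ⁿ = p_ρ(a). -/

import Mathlib

open Matrix Kronecker
open scoped ComplexOrder

noncomputable def pauli1 : Fin 4 → Matrix (Fin 2) (Fin 2) ℂ
  | 0 => !![1, 0; 0, 1]
  | 1 => !![0, 1; 1, 0]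
  | 2 => !![0, -Complex.I; Complex.I, 0]
  | 3 => !![1, 0; 0, -1]

noncomputable def PauliOp {n : ℕ} (a : Fin n → Fin 4) :
    Matrix (Fin n → Fin 2) (Fin n → Fin 2) ℂ :=
  Matrix.of fun z z' => ∏ i, pauli1 (a i) (z i) (z' i)

/-- The positive semidefinite square root of a positive semidefinite matrix
(the definition `Matrix.PosSemidef.sqrt` of the older Mathlib, removed since). -/
noncomputable def Matrix.PosSemidef.sqrt {n : Type*} [Fintype n] [DecidableEq n]
    {𝕜 : Type*} [RCLike 𝕜] {A : Matrix n n 𝕜} (hA : A.PosSemidef) : Matrix n n 𝕜 :=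
  hA.isHermitian.eigenvectorUnitary.1 * diagonal ((↑) ∘ (√·) ∘ hA.isHermitian.eigenvalues) *
  (star hA.isHermitian.eigenvectorUnitary : Matrix n n 𝕜)

/-- The trace norm of a matrix: the trace of the positive semidefinite square root of `Aᴴ * A`. -/
noncomputable def traceNorm {m : Type*} [Fintype m] [DecidableEq m]
    (A : Matrix m m ℂ) : ℝ :=
  (Matrix.PosSemidef.sqrt (Matrix.posSemidef_conjTranspose_mul_self A)).trace.re

/-- A quantum state: positive semidefinite with unit trace. -/
structure IsState {m : Type*} [Fintype m] (ρ : Matrix m m ℂ) : Prop where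
  posSemidef : ρ.PosSemidef
  trace_one : ρ.trace = 1

/-- Pauli expectation value `⟨P_a⟩_ρ`. -/
noncomputable def pExp {n : ℕ} (ρ : Matrix (Fin n → Fin 2) (Fin n → Fin 2) ℂ)
    (a : Fin n → Fin 4) : ℝ := ((PauliOp a * ρ).trace).re

/-- The purity `tr ρ²`. -/
noncomputable def purity {m : Type*} [Fintype m] (ρ : Matrix m m ℂ) : ℝ :=
  ((ρ * ρ).trace).re

/-- The Pauli distribution `p_ρ`. -/
noncomputable def pDist {n : ℕ} (ρ : Matrix (Fin n → Fin 2) (Fin n → Fin 2) ℂ)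
    (a : Fin n → Fin 4) : ℝ := (pExp ρ a) ^ 2 / (2 ^ n * purity ρ)

/-- The cumulative distribution function `F_ρ`. -/
noncomputable def cdf {n : ℕ} (ρ : Matrix (Fin n → Fin 2) (Fin n → Fin 2) ℂ)
    (ε : ℝ) : ℝ := ∑ a : Fin n → Fin 4, if (pExp ρ a) ^ 2 ≤ ε then pDist ρ a else 0

/-- The maximally entangled state `|Φ₀⟩`. -/
noncomputable def Phi0 (n : ℕ) : (Fin n → Fin 2) × (Fin n → Fin 2) → ℂ :=
  fun p => if p.1 = p.2 then (↑(Real.sqrt (2 ^ n)))⁻¹ else 0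

/-- The Bell state `|Φ_a⟩ = (1 ⊗ P_a)|Φ₀⟩`. -/
noncomputable def BellVec {n : ℕ} (a : Fin n → Fin 4) :
    (Fin n → Fin 2) × (Fin n → Fin 2) → ℂ :=
  ((1 : Matrix (Fin n → Fin 2) (Fin n → Fin 2) ℂ) ⊗ₖ PauliOp a).mulVec (Phi0 n)

/-- The Bell distribution `q_ρ(a) = ⟨Φ_a| ρ ⊗ ρ |Φ_a⟩`. -/
noncomputable def qDist {n : ℕ} (ρ : Matrix (Fin n → Fin 2) (Fin n → Fin 2) ℂ)
    (a : Fin n → Fin 4) : ℝ :=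
  (star (BellVec a) ⬝ᵥ ((ρ ⊗ₖ ρ).mulVec (BellVec a))).re

/-- The W state. -/
noncomputable def Wstate (n : ℕ) : (Fin n → Fin 2) → ℂ :=
  fun z => if (∑ i, (z i : ℕ)) = 1 then (↑(Real.sqrt n))⁻¹ else 0

/-- The W state projector `|W_n⟩⟨W_n|`. -/
noncomputable def Wproj (n : ℕ) : Matrix (Fin n → Fin 2) (Fin n → Fin 2) ℂ :=
  Matrix.vecMulVec (Wstate n) (star (Wstate n))

lemma pauli1_conj (k : Fin 4) (i j : Fin 2) :
    (starRingEnd ℂ) (pauli1 k i j) = pauli1 k j i := by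
  fin_cases k <;> fin_cases i <;> fin_cases j <;>
    simp [pauli1]

lemma PauliOp_conj' {n : ℕ} (a : Fin n → Fin 4) (z z' : Fin n → Fin 2) :
    (starRingEnd ℂ) (PauliOp a z z') = PauliOp a z' z := by
  simp [PauliOp, map_prod, pauli1_conj]

lemma BellVec_apply' {n : ℕ} (a : Fin n → Fin 4) (p : (Fin n → Fin 2) × (Fin n → Fin 2)) :
    BellVec a p = PauliOp a p.2 p.1 * (↑(Real.sqrt (2 ^ n)))⁻¹ := by
  simp only [BellVec, Matrix.mulVec, dotProduct, Fintype.sum_prod_type,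
    kroneckerMap_apply, Phi0, Matrix.one_apply, ite_mul, one_mul, zero_mul,
    mul_ite, mul_zero]
  rw [Finset.sum_eq_single p.1]
  · simp
  · intro w _ hw; simp [Ne.symm hw]
  · simp

/-- For a real unit vector `ψ` and `ρ = ψψᴴ`, the Bell distribution
coincides with the Pauli distribution: `q_ρ(a) = ⟨ψ|P_a|ψ⟩²/2ⁿ = p_ρ(a)`. -/
theorem stmt_11 {n : ℕ} (hn : 1 ≤ n) (ψ : (Fin n → Fin 2) → ℂ)
    (hreal : ∀ z, (ψ z).im = 0) (hunit : star ψ ⬝ᵥ ψ = 1) :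
    ∀ a : Fin n → Fin 4,
      qDist (Matrix.vecMulVec ψ (star ψ)) a
        = (star ψ ⬝ᵥ (PauliOp a).mulVec ψ).re ^ 2 / 2 ^ n ∧
      qDist (Matrix.vecMulVec ψ (star ψ)) a
        = pDist (Matrix.vecMulVec ψ (star ψ)) a := by
  intro a
  set P := PauliOp a with hP
  set t := star ψ ⬝ᵥ P.mulVec ψ with htdef
  have hψ : ∀ z, (starRingEnd ℂ) (ψ z) = ψ z := fun z =>
    Complex.conj_eq_iff_im.mpr (hreal z)
  have htsum : t = ∑ z, ∑ w, ψ z * (P z w * ψ w) := by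
    simp only [htdef, dotProduct, Matrix.mulVec, Pi.star_apply, RCLike.star_def, hψ,
      Finset.mul_sum]
  have ht : (starRingEnd ℂ) t = t := by
    rw [htsum, hP]
    simp only [map_sum, _root_.map_mul, hψ, PauliOp_conj']
    rw [Finset.sum_comm]
    exact Finset.sum_congr rfl fun z _ => Finset.sum_congr rfl fun w _ => by ring
  have htre : (t.re : ℂ) = t := Complex.conj_eq_iff_re.mp ht
  set s : ℂ := (↑(Real.sqrt (2 ^ n)))⁻¹ with hs
  have hscr : (starRingEnd ℂ) s = s := by
    simp [hs, map_inv₀, Complex.conj_ofReal]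
  have hBconj : ∀ p : (Fin n → Fin 2) × (Fin n → Fin 2),
      (starRingEnd ℂ) (BellVec a p) = P p.1 p.2 * s := by
    intro p
    rw [BellVec_apply']
    simp only [_root_.map_mul, map_inv₀, Complex.conj_ofReal, PauliOp_conj']
    rfl
  have hE : star (BellVec a) ⬝ᵥ (((Matrix.vecMulVec ψ (star ψ)) ⊗ₖ (Matrix.vecMulVec ψ (star ψ))).mulVec (BellVec a))
      = (∑ p : (Fin n → Fin 2) × (Fin n → Fin 2), P p.1 p.2 * s * (ψ p.1 * ψ p.2))
        * (∑ q : (Fin n → Fin 2) × (Fin n → Fin 2), ψ q.1 * ψ q.2 * (P q.2 q.1 * s)) := by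
    rw [Finset.sum_mul_sum]
    simp only [dotProduct, Matrix.mulVec, kroneckerMap_apply, vecMulVec_apply,
      Pi.star_apply, RCLike.star_def, hψ, hBconj, Finset.mul_sum]
    refine Finset.sum_congr rfl fun p _ => Finset.sum_congr rfl fun q _ => ?_
    rw [BellVec_apply']
    ring
  have hfac1 : (∑ p : (Fin n → Fin 2) × (Fin n → Fin 2), P p.1 p.2 * s * (ψ p.1 * ψ p.2)) = s * t := by
    rw [htsum, Finset.mul_sum, Fintype.sum_prod_type]
    refine Finset.sum_congr rfl fun z _ => ?_
    rw [Finset.mul_sum]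
    exact Finset.sum_congr rfl fun w _ => by ring
  have hfac2 : (∑ q : (Fin n → Fin 2) × (Fin n → Fin 2), ψ q.1 * ψ q.2 * (P q.2 q.1 * s)) = s * t := by
    rw [htsum, Finset.mul_sum, Fintype.sum_prod_type, Finset.sum_comm]
    refine Finset.sum_congr rfl fun z _ => ?_
    rw [Finset.mul_sum]
    exact Finset.sum_congr rfl fun w _ => by ring
  have hx : s * t = ((((Real.sqrt (2 ^ n)))⁻¹ * t.re : ℝ) : ℂ) := by
    rw [Complex.ofReal_mul, Complex.ofReal_inv, htre, hs]
  have h2 : (0:ℝ) ≤ 2 ^ n := by positivity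
  have hss : Real.sqrt (2 ^ n) * Real.sqrt (2 ^ n) = 2 ^ n := Real.mul_self_sqrt h2
  have hq : qDist (Matrix.vecMulVec ψ (star ψ)) a = t.re ^ 2 / 2 ^ n := by
    unfold qDist
    rw [hE, hfac1, hfac2, hx, ← Complex.ofReal_mul, Complex.ofReal_re]
    have hkey : ((Real.sqrt (2 ^ n))⁻¹ * t.re) * ((Real.sqrt (2 ^ n))⁻¹ * t.re)
        = t.re ^ 2 / (Real.sqrt (2 ^ n) * Real.sqrt (2 ^ n)) := by
      have hpos : (0:ℝ) < Real.sqrt (2 ^ n) := Real.sqrt_pos.mpr (by positivity)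
      field_simp
    rw [hkey, hss]
  refine ⟨hq, ?_⟩
  have htr : (P * Matrix.vecMulVec ψ (star ψ)).trace = t := by
    rw [htsum]
    simp only [Matrix.trace, Matrix.diag, Matrix.mul_apply, vecMulVec_apply,
      Pi.star_apply, RCLike.star_def, hψ]
    exact Finset.sum_congr rfl fun z _ => Finset.sum_congr rfl fun w _ => by ring
  have hpur : (Matrix.vecMulVec ψ (star ψ) * Matrix.vecMulVec ψ (star ψ)).trace = 1 := by
    have h1 : (star ψ ⬝ᵥ ψ) * (star ψ ⬝ᵥ ψ) = 1 := by rw [hunit]; ring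
    rw [← h1]
    simp only [Matrix.trace, Matrix.diag, Matrix.mul_apply, vecMulVec_apply,
      Pi.star_apply, RCLike.star_def, dotProduct, Finset.sum_mul_sum]
    exact Finset.sum_congr rfl fun z _ => Finset.sum_congr rfl fun w _ => by ring
  rw [hq]
  unfold pDist pExp purity
  rw [← hP, htr, hpur]
  norm_num
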